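/- The correspondence G↦M(G)=G∪{0} extends to a faithful functor M from the category of special groups (with SG-morphisms) to the category of multifields (with multiring morphisms): every SG-morphism f:G→H extends (by f(0)=0) to a multiring morphism M(f):M(G)→M(H), composition is preserved, and M(f)=M(g) implies f=g. -/
import Mathlib


universe u v w

/-- The data of a multiring: a multivalued addition, a (single-valued) multiplication,
a negation map and constants `0`, `1`. -/
structure MultiringData (R : Type u) where
  add : R → R → Set R
  mul : R → R → R
  neg : R → R
  zero : R
  one : R

/-- `(R,+,·,−,0,1)` is a multiring: `(R,+,−,0)` is a commutative multigroup,
`(R,·,1)` is a commutative monoid, `a·0 = 0`, and `c ∈ a+b → cd ∈ ad+bd`. -/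
structure IsMultiring {R : Type u} (A : MultiringData R) : Prop where
  add_nonempty : ∀ a b, (A.add a b).Nonempty
  add_comm' : ∀ a b, A.add a b = A.add b a
  add_rev : ∀ {a b d}, d ∈ A.add a b → a ∈ A.add d (A.neg b) ∧ b ∈ A.add (A.neg a) d
  zero_add' : ∀ {x y}, y ∈ A.add A.zero x ↔ x = y
  add_assoc' : ∀ a b c, (⋃ t ∈ A.add a b, A.add t c) = ⋃ s ∈ A.add b c, A.add a s
  mul_comm' : ∀ a b, A.mul a b = A.mul b a
  mul_assoc' : ∀ a b c, A.mul (A.mul a b) c = A.mul a (A.mul b c)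
  one_mul' : ∀ a, A.mul A.one a = a
  mul_zero' : ∀ a, A.mul a A.zero = A.zero
  distrib : ∀ (d : R) {a b c : R}, c ∈ A.add a b → A.mul c d ∈ A.add (A.mul a d) (A.mul b d)

/-- A multifield is a multiring in which every nonzero element has a multiplicative
inverse (and `1 ≠ 0`). -/
structure IsMultifield {R : Type u} (A : MultiringData R) extends IsMultiring A : Prop where
  one_ne_zero' : A.one ≠ A.zero
  inv : ∀ a, a ≠ A.zero → ∃ b, A.mul a b = A.one

/-- A real reduced multifield: a multifield with `a³ = a` and `a ∈ 1+1 → a = 1`. -/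
def IsRealReducedMultifield {R : Type u} (A : MultiringData R) : Prop :=
  IsMultifield A ∧ (∀ a, A.mul (A.mul a a) a = a) ∧ ∀ a, a ∈ A.add A.one A.one → a = A.one

/-- A real reduced multiring: `1 ≠ 0`, `a³ = a`, `c ∈ a + ab² → c = a`, and
`c, d ∈ a² + b² → c = d`. -/
def IsRealReducedMultiring {R : Type u} (A : MultiringData R) : Prop :=
  IsMultiring A ∧ A.one ≠ A.zero ∧ (∀ a, A.mul (A.mul a a) a = a) ∧
    (∀ a b c, c ∈ A.add a (A.mul a (A.mul b b)) → c = a) ∧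
    (∀ a b c d, c ∈ A.add (A.mul a a) (A.mul b b) → d ∈ A.add (A.mul a a) (A.mul b b) → c = d)

/-- Morphisms of multirings. -/
structure IsMultiringHom {R : Type u} {S : Type v} (A : MultiringData R) (B : MultiringData S)
    (f : R → S) : Prop where
  map_add : ∀ {a b c}, c ∈ A.add a b → f c ∈ B.add (f a) (f b)
  map_neg : ∀ a, f (A.neg a) = B.neg (f a)
  map_zero : f A.zero = B.zero
  map_mul : ∀ a b, f (A.mul a b) = B.mul (f a) (f b)
  map_one : f A.one = B.one

/-- Isomorphisms of multirings: bijective morphisms whose inverse is again a morphism. -/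
def IsMultiringIso {R : Type u} {S : Type v} (A : MultiringData R) (B : MultiringData S)
    (f : R → S) : Prop :=
  IsMultiringHom A B f ∧ Function.Bijective f ∧
    ∀ a b c, f c ∈ B.add (f a) (f b) → c ∈ A.add a b
/-- The data of a special group: a group operation on `G`, the unit, a distinguished
element `−1`, and the special relation `≡` on `G²`. -/
structure SGData (G : Type u) where
  mul : G → G → G
  one : G
  negOne : G
  equiv : G × G → G × G → Prop

/-- `−a = (−1)·a` in a special group. -/
def SGData.neg {G : Type u} (S : SGData G) (a : G) : G := S.mul S.negOne a

/-- The extension of `≡` to a binary relation on `G³`. -/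
def SGData.equiv3 {G : Type u} (S : SGData G) (u v : G × G × G) : Prop :=
  ∃ x y z, S.equiv (u.1, x) (v.1, y) ∧ S.equiv (u.2.1, u.2.2) (x, z) ∧
    S.equiv (v.2.1, v.2.2) (y, z)

/-- `(G, ≡, −1)` is a special group: `G` is a group of exponent 2 and `≡` satisfies
axioms SG0–SG6. -/
structure IsSpecialGroup {G : Type u} (S : SGData G) : Prop where
  mul_comm' : ∀ a b, S.mul a b = S.mul b a
  mul_assoc' : ∀ a b c, S.mul (S.mul a b) c = S.mul a (S.mul b c)
  one_mul' : ∀ a, S.mul S.one a = a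
  exp2 : ∀ a, S.mul a a = S.one
  sg0 : Equivalence S.equiv
  sg1 : ∀ a b, S.equiv (a, b) (b, a)
  sg2 : ∀ a, S.equiv (a, S.neg a) (S.one, S.negOne)
  sg3 : ∀ a b c d, S.equiv (a, b) (c, d) → S.mul a b = S.mul c d
  sg4 : ∀ a b c d, S.equiv (a, b) (c, d) → S.equiv (a, S.neg c) (S.neg b, d)
  sg5 : ∀ a b c d g, S.equiv (a, b) (c, d) →
    S.equiv (S.mul g a, S.mul g b) (S.mul g c, S.mul g d)
  sg6 : ∀ u v w, S.equiv3 u v → S.equiv3 v w → S.equiv3 u w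

/-- `c ∈ D_G(a,b)`: `c` is represented by the form `⟨a,b⟩`. -/
def SGData.rep {G : Type u} (S : SGData G) (a b c : G) : Prop := ∃ d, S.equiv (c, d) (a, b)

/-- The multiring data `M(G) = G ∪ {0}` associated to a special group: the group product
extended by `0`, `−a = (−1)·a`, and `a + b = {b}` if `a = 0`, `{a}` if `b = 0`, `M(G)` if
`a = −b ≠ 0`, and `D_G(a,b)` otherwise. -/
def MofSG {G : Type u} (S : SGData G) : MultiringData (Option G) where
  add a b :=
    {c | (a = none ∧ c = b) ∨ (b = none ∧ c = a) ∨
      (∃ g : G, a = some g ∧ b = some (S.neg g)) ∨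
      (∃ g k m : G, a = some g ∧ b = some k ∧ k ≠ S.neg g ∧ c = some m ∧ S.rep g k m)}
  mul a b :=
    match a, b with
    | some g, some k => some (S.mul g k)
    | _, _ => none
  neg a := a.map S.neg
  zero := none
  one := some S.one
/-- A morphism of special groups: a group homomorphism with `f(−1) = −1` preserving the
special relation. -/
def IsSGMorphism {G : Type u} {H : Type v} (S : SGData G) (T : SGData H) (f : G → H) : Prop :=
  (∀ a b, f (S.mul a b) = T.mul (f a) (f b)) ∧ f S.negOne = T.negOne ∧
    ∀ a b c d, S.equiv (a, b) (c, d) → T.equiv (f a, f b) (f c, f d)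

/-- The correspondence `G ↦ M(G) = G ∪ {0}` extends to a faithful functor from special groups
to multifields: every SG-morphism `f` extends (by `f(0) = 0`) to a multiring morphism
`M(f) : M(G) → M(H)`, composition is preserved, and `M(f) = M(g)` implies `f = g`. -/
theorem sg_to_multifield_faithful_functor :
    (∀ (G H : Type u) (S : SGData G) (T : SGData H), IsSpecialGroup S → IsSpecialGroup T →
      ∀ f : G → H, IsSGMorphism S T f →
        IsMultiringHom (MofSG S) (MofSG T) (Option.map f)) ∧
    (∀ (G H K : Type u) (f : G → H) (g : H → K),
      Option.map (g ∘ f) = Option.map g ∘ Option.map f) ∧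
    (∀ (G H : Type u) (S : SGData G) (T : SGData H), IsSpecialGroup S → IsSpecialGroup T →
      ∀ f g : G → H, IsSGMorphism S T f → IsSGMorphism S T g →
        Option.map f = Option.map g → f = g) := by
  refine ⟨?_, ?_, ?_⟩
  · intro G H S T hS hT f hf
    obtain ⟨hmul, hneg1, hequiv⟩ := hf
    have hnegcomm : ∀ a, f (S.neg a) = T.neg (f a) := by
      intro a
      simp [SGData.neg, hmul, hneg1]
    have hone : f S.one = T.one := by
      have := hmul S.negOne S.negOne
      rw [hS.exp2, hneg1, hT.exp2] at this
      exact this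
    constructor
    · intro a b c hc
      rcases hc with ⟨rfl, rfl⟩ | ⟨rfl, rfl⟩ | ⟨g, rfl, rfl⟩ | ⟨g, k, m, rfl, rfl, hk, rfl, d, hd⟩
      · exact Or.inl ⟨rfl, rfl⟩
      · exact Or.inr (Or.inl ⟨rfl, rfl⟩)
      · refine Or.inr (Or.inr (Or.inl ⟨f g, rfl, ?_⟩))
        simp [hnegcomm]
      · by_cases hfk : f k = T.neg (f g)
        · exact Or.inr (Or.inr (Or.inl ⟨f g, rfl, by simp [hfk]⟩))
        · exact Or.inr (Or.inr (Or.inr ⟨f g, f k, f m, rfl, rfl, hfk, rfl, f d,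
            hequiv _ _ _ _ hd⟩))
    · intro a
      cases a with
      | none => rfl
      | some a => simp [MofSG, hnegcomm]
    · rfl
    · intro a b
      cases a <;> cases b <;> simp [MofSG, hmul]
    · simp [MofSG, hone]
  · intro G H K f g
    funext a
    cases a <;> rfl
  · intro G H S T hS hT f g hf hg h
    funext a
    have := congrFun h (some a)
    simpa using this
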